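/- Let $F : M_F(E) \to \mathbb{R}$ be continuous on the space of finite measures on a compact metric space $E$, with directional derivative $D_x F(\mu) = \lim_{\varepsilon \to 0}(F(\mu + \varepsilon \delta_x) - F(\mu))/\varepsilon$ existing and jointly continuous and bounded in $(x, \mu)$. Then for every $\mu \in M_F(E)$: $F(\mu) = F(0) + \int_0^1 \int_E D_x F(\theta \mu)\, \mu(dx)\, d\theta$. -/

import Mathlib

open MeasureTheory Filter Set

/-- The Dirac measure at `x`, as a finite measure. -/
noncomputable def diracFM {E : Type*} [MeasurableSpace E] (x : E) : FiniteMeasure E :=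
  ⟨MeasureTheory.Measure.dirac x, inferInstance⟩

section JTAux
open Topology Metric
open scoped NNReal BoundedContinuousFunction
set_option linter.unusedSectionVars false
set_option maxHeartbeats 1600000

namespace JT
variable {E : Type*} [MetricSpace E] [CompactSpace E] [MeasurableSpace E] [BorelSpace E]

lemma integral_add_fm (f : E →ᵇ ℝ) (ρ σ : FiniteMeasure E) :
    ∫ x, f x ∂((ρ + σ : FiniteMeasure E) : Measure E)
      = (∫ x, f x ∂(ρ : Measure E)) + ∫ x, f x ∂(σ : Measure E) := by
  rw [FiniteMeasure.toMeasure_add]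
  exact integral_add_measure (f.integrable _) (f.integrable _)

lemma integral_smul_fm (f : E →ᵇ ℝ) (c : ℝ≥0) (ρ : FiniteMeasure E) :
    ∫ x, f x ∂(((c • ρ : FiniteMeasure E)) : Measure E)
      = (c : ℝ) • ∫ x, f x ∂(ρ : Measure E) := by
  rw [FiniteMeasure.toMeasure_smul, integral_smul_nnreal_measure]
  rfl

lemma contAdd : Continuous fun p : FiniteMeasure E × FiniteMeasure E => p.1 + p.2 := by
  rw [continuous_iff_continuousAt]
  rintro ⟨ρ, σ⟩
  have h1 : Tendsto (fun p : FiniteMeasure E × FiniteMeasure E => p.1) (𝓝 (ρ, σ)) (𝓝 ρ) :=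
    continuous_fst.continuousAt
  have h2 : Tendsto (fun p : FiniteMeasure E × FiniteMeasure E => p.2) (𝓝 (ρ, σ)) (𝓝 σ) :=
    continuous_snd.continuousAt
  apply FiniteMeasure.tendsto_of_forall_integral_tendsto
  intro f
  have e1 := FiniteMeasure.tendsto_iff_forall_integral_tendsto.mp h1 f
  have e2 := FiniteMeasure.tendsto_iff_forall_integral_tendsto.mp h2 f
  have h := e1.add e2
  simp_rw [integral_add_fm f]
  exact h

lemma contSMul_left (ν : FiniteMeasure E) : Continuous fun c : ℝ≥0 => c • ν := by
  rw [continuous_iff_continuousAt]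
  intro c₀
  apply FiniteMeasure.tendsto_of_forall_integral_tendsto
  intro f
  simp_rw [integral_smul_fm f]
  exact ((NNReal.continuous_coe.smul continuous_const).tendsto c₀)

lemma contSMul_right (c : ℝ≥0) : Continuous fun ρ : FiniteMeasure E => c • ρ := by
  rw [continuous_iff_continuousAt]
  intro ρ₀
  apply FiniteMeasure.tendsto_of_forall_integral_tendsto
  intro f
  simp_rw [integral_smul_fm f]
  exact (FiniteMeasure.tendsto_iff_forall_integral_tendsto.mp tendsto_id f).const_smul _

lemma contAddLeft (m : FiniteMeasure E) : Continuous fun ρ : FiniteMeasure E => m + ρ :=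
  contAdd.comp (continuous_const.prodMk continuous_id)

/-- The map `m ↦ DF · m` as a continuous map into `C(E, ℝ)`. -/
noncomputable def Phi (DF : E → FiniteMeasure E → ℝ)
    (hDFcont : Continuous (fun p : E × FiniteMeasure E => DF p.1 p.2)) :
    C(FiniteMeasure E, C(E, ℝ)) :=
  ContinuousMap.curry ((ContinuousMap.mk _ hDFcont).comp ⟨Prod.swap, continuous_swap⟩)

lemma Phi_apply (DF : E → FiniteMeasure E → ℝ) (hDFcont) (m : FiniteMeasure E) (x : E) :
    Phi DF hDFcont m x = DF x m := rfl

lemma tendsto_integral_DF {ι : Type*} {l : Filter ι}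
    (DF : E → FiniteMeasure E → ℝ)
    (hDFcont : Continuous (fun p : E × FiniteMeasure E => DF p.1 p.2))
    {m ρ : ι → FiniteMeasure E} {m₀ ρ₀ : FiniteMeasure E}
    (hm : Tendsto m l (𝓝 m₀)) (hρ : Tendsto ρ l (𝓝 ρ₀)) :
    Tendsto (fun i => ∫ x, DF x (m i) ∂((ρ i) : Measure E)) l
      (𝓝 (∫ x, DF x m₀ ∂(ρ₀ : Measure E))) := by
  set Φ := Phi DF hDFcont with hΦdef
  have hΦ : Tendsto (fun i => Φ (m i)) l (𝓝 (Φ m₀)) :=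
    (Φ.continuous.tendsto m₀).comp hm
  have hd : Tendsto (fun i => dist (Φ (m i)) (Φ m₀)) l (𝓝 0) :=
    tendsto_iff_dist_tendsto_zero.mp hΦ
  have hmass : Tendsto (fun i => ((ρ i).mass : ℝ)) l (𝓝 (ρ₀.mass : ℝ)) :=
    (NNReal.continuous_coe.tendsto _).comp hρ.mass
  -- second part : ∫ DF x m₀ ∂ρ i → ∫ DF x m₀ ∂ρ₀
  have hB : Tendsto (fun i => ∫ x, DF x m₀ ∂((ρ i) : Measure E)) l
      (𝓝 (∫ x, DF x m₀ ∂(ρ₀ : Measure E))) := by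
    have := FiniteMeasure.tendsto_iff_forall_integral_tendsto.mp hρ
      (BoundedContinuousFunction.mkOfCompact (Φ m₀))
    simpa [hΦdef, Phi_apply] using this
  -- first part → 0
  have hA : Tendsto (fun i => (∫ x, DF x (m i) ∂((ρ i) : Measure E))
      - ∫ x, DF x m₀ ∂((ρ i) : Measure E)) l (𝓝 0) := by
    apply squeeze_zero_norm (a := fun i => dist (Φ (m i)) (Φ m₀) * ((ρ i).mass : ℝ))
    · intro i
      have hint1 : Integrable (fun x => DF x (m i)) ((ρ i) : Measure E) := by
        exact
          (BoundedContinuousFunction.mkOfCompact (Φ (m i))).integrable ((ρ i) : Measure E)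
      have hint2 : Integrable (fun x => DF x m₀) ((ρ i) : Measure E) := by
        exact
          (BoundedContinuousFunction.mkOfCompact (Φ m₀)).integrable ((ρ i) : Measure E)
      rw [← integral_sub hint1 hint2]
      have hb : ∀ x, ‖DF x (m i) - DF x m₀‖ ≤ dist (Φ (m i)) (Φ m₀) := by
        intro x
        have := ContinuousMap.dist_apply_le_dist (f := Φ (m i)) (g := Φ m₀) x
        simpa [hΦdef, Phi_apply, Real.dist_eq] using this
      have := norm_integral_le_of_norm_le_const (μ := ((ρ i) : Measure E)) (C := dist (Φ (m i)) (Φ m₀)) (Eventually.of_forall hb)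
      simpa [FiniteMeasure.mass, FiniteMeasure.ennreal_coeFn_eq_coeFn_toMeasure] using this
    · simpa using hd.mul hmass
  have := hA.add hB
  simpa using this

lemma L1 (F : FiniteMeasure E → ℝ) (DF : E → FiniteMeasure E → ℝ)
    (hF : Continuous F)
    (hderiv : ∀ (x : E) (μ : FiniteMeasure E),
      Tendsto (fun ε : ℝ≥0 => (F (μ + ε • diracFM x) - F μ) / (ε : ℝ))
        (nhdsWithin 0 (Ioi 0)) (nhds (DF x μ)))
    (hDFcont : Continuous (fun p : E × FiniteMeasure E => DF p.1 p.2))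
    (m : FiniteMeasure E) (x : E) (c : ℝ≥0) :
    F (m + c • diracFM x) = F m
      + ∫ s in (0:ℝ)..1, (c:ℝ) * DF x (m + (Real.toNNReal s * c) • diracFM x) := by
  rcases eq_or_ne c 0 with rfl | hc
  · simp
  -- continuity of the path and of the candidate derivative
  have cont_path : Continuous fun s : ℝ => m + (Real.toNNReal s * c) • diracFM x := by
    exact (contAddLeft m).comp
      ((contSMul_left (diracFM x)).comp (continuous_real_toNNReal.mul continuous_const))
  set v : ℝ → ℝ := fun s => F (m + (Real.toNNReal s * c) • diracFM x) with hv_def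
  set d : ℝ → ℝ := fun s => (c:ℝ) * DF x (m + (Real.toNNReal s * c) • diracFM x) with hd_def
  have hv : Continuous v := hF.comp cont_path
  have hd : Continuous d :=
    continuous_const.mul (hDFcont.comp (continuous_const.prodMk cont_path))
  have key : ∀ s ∈ Ioo (0:ℝ) 1, HasDerivWithinAt v (d s) (Ioi s) s := by
    intro s hs
    rw [hasDerivWithinAt_iff_tendsto_slope]
    have hIoi : Ioi s \ {s} = Ioi s := diff_singleton_eq_self (by simp)
    rw [hIoi]
    set μ' := m + (Real.toNNReal s * c) • diracFM x with hμ'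
    have inner : Tendsto (fun y : ℝ => (Real.toNNReal (y - s) * c))
        (𝓝[Ioi s] s) (𝓝[Ioi 0] (0:ℝ≥0)) := by
      rw [tendsto_nhdsWithin_iff]
      constructor
      · have : Continuous fun y : ℝ => Real.toNNReal (y - s) * c :=
          (continuous_real_toNNReal.comp (continuous_id.sub continuous_const)).mul
            continuous_const
        have h0 : Real.toNNReal (s - s) * c = 0 := by simp
        simpa [h0] using (this.tendsto s).mono_left nhdsWithin_le_nhds
      · filter_upwards [self_mem_nhdsWithin] with y hy
        have h1 : (0:ℝ) < y - s := sub_pos.mpr hy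
        have : (0:ℝ≥0) < Real.toNNReal (y - s) := Real.toNNReal_pos.mpr h1
        exact mul_pos this (pos_iff_ne_zero.mpr hc)
    have hcomp : Tendsto
        (fun y : ℝ => (F (μ' + (Real.toNNReal (y - s) * c) • diracFM x) - F μ')
          / ((Real.toNNReal (y - s) * c : ℝ≥0) : ℝ))
        (𝓝[Ioi s] s) (𝓝 (DF x μ')) := (hderiv x μ').comp inner
    have hmul : Tendsto
        (fun y : ℝ => (c:ℝ) * ((F (μ' + (Real.toNNReal (y - s) * c) • diracFM x) - F μ')
          / ((Real.toNNReal (y - s) * c : ℝ≥0) : ℝ)))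
        (𝓝[Ioi s] s) (𝓝 ((c:ℝ) * DF x μ')) := hcomp.const_mul _
    refine hmul.congr' ?_
    filter_upwards [self_mem_nhdsWithin] with y hy
    have hys : (0:ℝ) < y - s := sub_pos.mpr hy
    have hsy : Real.toNNReal y * c = Real.toNNReal s * c + Real.toNNReal (y - s) * c := by
      rw [← add_mul, ← Real.toNNReal_add hs.1.le (le_of_lt hys)]
      congr 1
      ring_nf
    have hvy : v y = F (μ' + (Real.toNNReal (y - s) * c) • diracFM x) := by
      simp only [hv_def, hμ', hsy, add_smul, add_assoc]
    have hcoe : ((Real.toNNReal (y - s) * c : ℝ≥0) : ℝ) = (y - s) * (c:ℝ) := by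
      rw [NNReal.coe_mul, Real.coe_toNNReal _ (le_of_lt hys)]
    rw [slope_def_field, hvy]
    have hvs : v s = F μ' := rfl
    rw [hvs, hcoe]
    have hc' : (c:ℝ) ≠ 0 := by exact_mod_cast hc
    field_simp
  have ftc := intervalIntegral.integral_eq_sub_of_hasDeriv_right_of_le zero_le_one
    hv.continuousOn key (hd.intervalIntegrable 0 1)
  have hv1 : v 1 = F (m + c • diracFM x) := by norm_num [hv_def]
  have hv0 : v 0 = F m := by simp [hv_def]
  rw [hv1, hv0] at ftc
  linarith [ftc]

variable (F : FiniteMeasure E → ℝ) (DF : E → FiniteMeasure E → ℝ)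
    (hF : Continuous F)
    (hderiv : ∀ (x : E) (μ : FiniteMeasure E),
      Tendsto (fun ε : ℝ≥0 => (F (μ + ε • diracFM x) - F μ) / (ε : ℝ))
        (nhdsWithin 0 (Ioi 0)) (nhds (DF x μ)))
    (hDFcont : Continuous (fun p : E × FiniteMeasure E => DF p.1 p.2))

include hF hderiv hDFcont in
lemma Ltel (k : ℕ) (y : ℕ → E) (d : ℕ → ℝ≥0) (m : FiniteMeasure E) :
    F (m + ∑ i ∈ Finset.range k, d i • diracFM (y i))
      = F m + ∑ i ∈ Finset.range k, ∫ t in (0:ℝ)..1,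
          (d i : ℝ) * DF (y i) ((m + ∑ j ∈ Finset.range i, d j • diracFM (y j))
            + (Real.toNNReal t * d i) • diracFM (y i)) := by
  induction k with
  | zero => simp
  | succ k ih =>
    rw [Finset.sum_range_succ, ← add_assoc, Finset.sum_range_succ (f := fun i => ∫ t in (0:ℝ)..1,
          (d i : ℝ) * DF (y i) ((m + ∑ j ∈ Finset.range i, d j • diracFM (y j))
            + (Real.toNNReal t * d i) • diracFM (y i)))]
    rw [L1 F DF hF hderiv hDFcont (m + ∑ i ∈ Finset.range k, d i • diracFM (y i)) (y k) (d k)]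
    rw [ih]
    ring

include hF hderiv hDFcont in
lemma L2 (hDFbdd : ∃ C : ℝ, ∀ (x : E) (μ : FiniteMeasure E), |DF x μ| ≤ C)
    (k : ℕ) (y : ℕ → E) (c : ℕ → ℝ≥0) :
    F (∑ i ∈ Finset.range k, c i • diracFM (y i))
      = F 0 + ∫ s in (0:ℝ)..1, ∑ i ∈ Finset.range k,
          (c i : ℝ) * DF (y i) (Real.toNNReal s • ∑ j ∈ Finset.range k, c j • diracFM (y j)) := by
  obtain ⟨C, hC⟩ := hDFbdd
  set ν : FiniteMeasure E := ∑ j ∈ Finset.range k, c j • diracFM (y j) with hν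
  set u : ℝ → ℝ := fun θ => F (Real.toNNReal θ • ν) with hu_def
  set D : ℝ → ℝ := fun θ => ∑ i ∈ Finset.range k, (c i : ℝ) * DF (y i) (Real.toNNReal θ • ν)
    with hD_def
  have cont_path : Continuous fun θ : ℝ => Real.toNNReal θ • ν :=
    (contSMul_left ν).comp continuous_real_toNNReal
  have hu : Continuous u := hF.comp cont_path
  have hD : Continuous D := by
    apply continuous_finset_sum
    intro i _
    exact continuous_const.mul (hDFcont.comp (continuous_const.prodMk cont_path))
  have key : ∀ θ ∈ Ioo (0:ℝ) 1, HasDerivWithinAt u (D θ) (Ioi θ) θ := by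
    intro θ hθ
    rw [hasDerivWithinAt_iff_tendsto_slope]
    rw [diff_singleton_eq_self (by simp)]
    set m : FiniteMeasure E := Real.toNNReal θ • ν with hm
    -- the auxiliary measures
    set A : ℕ → ℝ≥0 → ℝ → FiniteMeasure E := fun i ε t =>
      m + ε • (∑ j ∈ Finset.range i, c j • diracFM (y j))
        + (Real.toNNReal t * (ε * c i)) • diracFM (y i) with hA
    set H : ℝ≥0 → ℝ := fun ε =>
      ∑ i ∈ Finset.range k, (c i : ℝ) * ∫ t in (0:ℝ)..1, DF (y i) (A i ε t) with hH
    -- Step 2 : H tends to D θ as ε → 0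
    have step2 : Tendsto H (𝓝 0) (𝓝 (D θ)) := by
      rw [hD_def]
      apply tendsto_finset_sum
      intro i _
      have hG : Tendsto (fun ε : ℝ≥0 => ∫ t in (0:ℝ)..1, DF (y i) (A i ε t)) (𝓝 0)
          (𝓝 (DF (y i) m)) := by
        have hrw : ∀ ε : ℝ≥0, ∫ t in (0:ℝ)..1, DF (y i) (A i ε t)
            = ∫ t in Ioc (0:ℝ) 1, DF (y i) (A i ε t) := fun ε =>
          intervalIntegral.integral_of_le zero_le_one
        simp_rw [hrw]
        have lim : Tendsto (fun ε : ℝ≥0 => ∫ t in Ioc (0:ℝ) 1, DF (y i) (A i ε t)) (𝓝 0)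
            (𝓝 (∫ t in Ioc (0:ℝ) 1, DF (y i) m)) := by
          apply tendsto_integral_filter_of_dominated_convergence (fun _ => C)
          · filter_upwards with ε
            have hAt : Continuous fun t => A i ε t := by
              exact (contAddLeft (m + ε • ∑ j ∈ Finset.range i, c j • diracFM (y j))).comp
                ((contSMul_left _).comp (continuous_real_toNNReal.mul continuous_const))
            exact (hDFcont.comp (continuous_const.prodMk hAt)).aestronglyMeasurable
          · filter_upwards with ε
            filter_upwards with t
            exact hC _ _
          · exact integrable_const _
          · filter_upwards with t
            have hcont : Continuous fun ε : ℝ≥0 => A i ε t := by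
              have h1 : Continuous fun ε : ℝ≥0 =>
                  m + ε • ∑ j ∈ Finset.range i, c j • diracFM (y j) :=
                (contAddLeft m).comp (contSMul_left _)
              have h2 : Continuous fun ε : ℝ≥0 =>
                  (Real.toNNReal t * (ε * c i)) • diracFM (y i) :=
                (contSMul_left _).comp
                  (continuous_const.mul (continuous_id.mul continuous_const))
              exact contAdd.comp (h1.prodMk h2)
            have h0 : A i 0 t = m := by
              simp [hA]
            have hDFe : Continuous fun ε : ℝ≥0 => DF (y i) (A i ε t) :=
              hDFcont.comp (Continuous.prodMk continuous_const hcont)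
            have he := hDFe.tendsto 0
            rw [h0] at he
            exact he
        have : (∫ _t in Ioc (0:ℝ) 1, DF (y i) m) = DF (y i) m := by
          simp [Real.volume_Ioc]
        rwa [this] at lim
      exact hG.const_mul _
    -- Step 3a : inner map
    have inner : Tendsto (fun yv : ℝ => Real.toNNReal (yv - θ)) (𝓝[Ioi θ] θ) (𝓝 0) := by
      have : Continuous fun yv : ℝ => Real.toNNReal (yv - θ) :=
        continuous_real_toNNReal.comp (continuous_id.sub continuous_const)
      have h0 : Real.toNNReal (θ - θ) = 0 := by simp
      simpa [h0] using (this.tendsto θ).mono_left nhdsWithin_le_nhds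
    have hcomp : Tendsto (fun yv : ℝ => H (Real.toNNReal (yv - θ))) (𝓝[Ioi θ] θ) (𝓝 (D θ)) :=
      step2.comp inner
    -- Step 1 : slope equality
    refine hcomp.congr' ?_
    filter_upwards [self_mem_nhdsWithin] with yv hyv
    set ε : ℝ≥0 := Real.toNNReal (yv - θ) with hε
    have hyθ : (0:ℝ) < yv - θ := sub_pos.mpr hyv
    have hεR : (ε : ℝ) = yv - θ := Real.coe_toNNReal _ hyθ.le
    have hsplit : Real.toNNReal yv • ν = m + ∑ i ∈ Finset.range k, (ε * c i) • diracFM (y i) := by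
      have h1 : Real.toNNReal yv = Real.toNNReal θ + ε := by
        rw [hε, ← Real.toNNReal_add hθ.1.le hyθ.le]
        congr 1
        ring
      rw [h1, add_smul, hm]
      congr 1
      rw [hν, Finset.smul_sum]
      exact Finset.sum_congr rfl fun i _ => (smul_smul ε (c i) _)
    have htel := Ltel F DF hF hderiv hDFcont k y (fun i => ε * c i) m
    have hpartial : ∀ i, (∑ j ∈ Finset.range i, (ε * c j) • diracFM (y j))
        = ε • ∑ j ∈ Finset.range i, c j • diracFM (y j) := by
      intro i
      rw [Finset.smul_sum]
      exact Finset.sum_congr rfl fun j _ => (smul_smul ε (c j) _).symm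
    have huyv : u yv = F m + ∑ i ∈ Finset.range k, ∫ t in (0:ℝ)..1,
        ((ε * c i : ℝ≥0) : ℝ) * DF (y i) (A i ε t) := by
      rw [hu_def]
      simp only [hsplit]
      rw [htel]
      congr 1
      refine Finset.sum_congr rfl fun i _ => ?_
      congr 1
      ext t
      congr 2
      rw [hpartial i, hA]
    have hne : yv - θ ≠ 0 := ne_of_gt hyθ
    have hdiff : u yv - u θ = (yv - θ) * H ε := by
      rw [huyv]
      have huθ : u θ = F m := rfl
      rw [huθ, hH, Finset.mul_sum, add_sub_cancel_left]
      refine Finset.sum_congr rfl fun i _ => ?_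
      rw [intervalIntegral.integral_const_mul]
      push_cast
      rw [hεR]
      ring
    rw [slope_def_field, hdiff]
    exact (mul_div_cancel_left₀ (H ε) hne).symm
  have ftc := intervalIntegral.integral_eq_sub_of_hasDeriv_right_of_le zero_le_one
    hu.continuousOn key (hD.intervalIntegrable 0 1)
  have hu1 : u 1 = F ν := by norm_num [hu_def]
  have hu0 : u 0 = F 0 := by simp [hu_def]
  rw [hu1, hu0] at ftc
  have : ∫ s in (0:ℝ)..1, D s = F ν - F 0 := ftc
  rw [hν] at this ⊢
  linarith [this]

lemma integral_fin_sum (f : E →ᵇ ℝ) (k : ℕ) (y : ℕ → E) (c : ℕ → ℝ≥0) :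
    ∫ x, f x ∂((∑ i ∈ Finset.range k, c i • diracFM (y i) : FiniteMeasure E) : Measure E)
      = ∑ i ∈ Finset.range k, (c i : ℝ) * f (y i) := by
  induction k with
  | zero => simp [FiniteMeasure.toMeasure_zero]
  | succ k ih =>
    rw [Finset.sum_range_succ, Finset.sum_range_succ, integral_add_fm, ih, integral_smul_fm]
    have : ∫ x, f x ∂((diracFM (y k) : FiniteMeasure E) : Measure E) = f (y k) := by
      have : ((diracFM (y k) : FiniteMeasure E) : Measure E) = Measure.dirac (y k) := rfl
      rw [this, integral_dirac]
    rw [this]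
    simp [smul_eq_mul]

lemma partition [Nonempty E] {r : ℝ} (hr : 0 < r) :
    ∃ (k : ℕ) (y : ℕ → E) (A : ℕ → Set E),
      (∀ i, MeasurableSet (A i)) ∧ (Pairwise (Function.onFun Disjoint A)) ∧
      (⋃ i, A i) = univ ∧ (∀ i, ∀ x ∈ A i, dist x (y i) < r) ∧ (∀ i, k ≤ i → A i = ∅) := by
  obtain ⟨t, ht⟩ := isCompact_univ.elim_finite_subcover (fun x : E => ball x r)
    (fun x => isOpen_ball) (fun x _ => mem_iUnion.mpr ⟨x, mem_ball_self hr⟩)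
  set l := t.toList with hl
  set k := l.length with hk
  set y : ℕ → E := fun i => l.getD i (Classical.arbitrary E) with hy
  set A : ℕ → Set E := fun i =>
    if i < k then ball (y i) r \ ⋃ (j : ℕ) (_ : j < i), ball (y j) r else ∅ with hA
  refine ⟨k, y, A, ?_, ?_, ?_, ?_, ?_⟩
  · intro i
    simp only [hA]
    split
    · exact measurableSet_ball.diff
        (MeasurableSet.iUnion fun j => MeasurableSet.iUnion fun _ => measurableSet_ball)
    · exact MeasurableSet.empty
  · intro i j hij
    wlog h : i < j generalizing i j
    · exact (this hij.symm (by omega)).symm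
    simp only [Function.onFun]
    rw [Set.disjoint_left]
    intro x hxi hxj
    simp only [hA] at hxi hxj
    by_cases hik : i < k
    · by_cases hjk : j < k
      · rw [if_pos hik] at hxi
        rw [if_pos hjk] at hxj
        exact hxj.2 (mem_iUnion.mpr ⟨i, mem_iUnion.mpr ⟨h, hxi.1⟩⟩)
      · rw [if_neg hjk] at hxj; exact hxj
    · rw [if_neg hik] at hxi; exact hxi
  · apply eq_univ_of_forall
    intro x
    have hx : ∃ i, i < k ∧ x ∈ ball (y i) r := by
      have := ht (mem_univ x)
      rw [mem_iUnion₂] at this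
      obtain ⟨z, hz, hxz⟩ := this
      rw [← Finset.mem_toList, ← hl] at hz
      obtain ⟨i, hi, hzi⟩ := List.getElem_of_mem hz
      refine ⟨i, hi, ?_⟩
      have hyy : y i = z := by
        show l.getD i (Classical.arbitrary E) = z
        rw [List.getD_eq_getElem l _ hi, hzi]
      rwa [hyy]
    classical
    set i₀ := Nat.find hx with hi₀
    have hP := Nat.find_spec hx
    rw [mem_iUnion]
    refine ⟨i₀, ?_⟩
    simp only [hA]
    rw [if_pos hP.1]
    refine ⟨hP.2, ?_⟩
    rw [mem_iUnion₂]
    rintro ⟨j, hj, hxj⟩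
    exact Nat.find_min hx hj ⟨lt_trans hj hP.1, hxj⟩
  · intro i x hx
    simp only [hA] at hx
    by_cases hik : i < k
    · rw [if_pos hik] at hx
      exact mem_ball.mp hx.1
    · rw [if_neg hik] at hx; exact absurd hx (notMem_empty x)
  · intro i hi
    simp only [hA]
    rw [if_neg (not_lt.mpr hi)]

lemma integral_partition (μ : FiniteMeasure E) (f : E →ᵇ ℝ) {A : ℕ → Set E}
    (hmeas : ∀ i, MeasurableSet (A i)) (hdisj : Pairwise (Function.onFun Disjoint A))
    (hcover : (⋃ i, A i) = univ) (k : ℕ) (hempty : ∀ i, k ≤ i → A i = ∅) :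
    ∫ x, f x ∂(μ : Measure E)
      = ∑ i ∈ Finset.range k, ∫ x in A i, f x ∂(μ : Measure E) := by
  have h1 : ∫ x, f x ∂(μ : Measure E) = ∫ x in ⋃ i, A i, f x ∂(μ : Measure E) := by
    rw [hcover, setIntegral_univ]
  rw [h1, integral_iUnion hmeas hdisj ((f.integrable _).integrableOn)]
  refine tsum_eq_sum ?_
  intro i hi
  rw [hempty i (by simpa using hi), Measure.restrict_empty, integral_zero_measure]

theorem main {E : Type*} [MetricSpace E] [CompactSpace E]
    [MeasurableSpace E] [BorelSpace E]
    (F : FiniteMeasure E → ℝ) (DF : E → FiniteMeasure E → ℝ)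
    (hF : Continuous F)
    (hderiv : ∀ (x : E) (μ : FiniteMeasure E),
      Tendsto (fun ε : NNReal => (F (μ + ε • diracFM x) - F μ) / (ε : ℝ))
        (nhdsWithin 0 (Ioi 0)) (nhds (DF x μ)))
    (hDFcont : Continuous (fun p : E × FiniteMeasure E => DF p.1 p.2))
    (hDFbdd : ∃ C : ℝ, ∀ (x : E) (μ : FiniteMeasure E), |DF x μ| ≤ C)
    (μ : FiniteMeasure E) :
    F μ = F 0 + ∫ θ in Icc (0 : ℝ) 1, (∫ x, DF x (θ.toNNReal • μ) ∂(μ.toMeasure)) := by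
  classical
  obtain ⟨C, hC⟩ := hDFbdd
  rcases isEmpty_or_nonempty E with hE | hE
  · have hμ0 : μ = 0 := by
      apply Subtype.ext
      ext s hs
      simp [Set.eq_empty_of_isEmpty s]
    rw [hμ0]
    simp [FiniteMeasure.toMeasure_zero]
  · -- partitions
    have hpart : ∀ n : ℕ, ∃ (k : ℕ) (y : ℕ → E) (A : ℕ → Set E),
        (∀ i, MeasurableSet (A i)) ∧ (Pairwise (Function.onFun Disjoint A)) ∧
        (⋃ i, A i) = univ ∧ (∀ i, ∀ x ∈ A i, dist x (y i) < 1/((n:ℝ)+1)) ∧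
        (∀ i, k ≤ i → A i = ∅) := fun n => partition (by positivity)
    choose k y A hmeas hdisj hcover hdist hempty using hpart
    set c : ℕ → ℕ → ℝ≥0 := fun n i => μ (A n i) with hc
    set ν : ℕ → FiniteMeasure E := fun n =>
      ∑ i ∈ Finset.range (k n), c n i • diracFM (y n i) with hνdef
    set M : ℝ := ((μ : Measure E) univ).toReal with hM
    have hM0 : 0 ≤ M := ENNReal.toReal_nonneg
    have coe_c : ∀ n i, ((c n i : ℝ)) = ((μ : Measure E) (A n i)).toReal := by
      intro n i
      rw [hc]
      rw [← FiniteMeasure.ennreal_coeFn_eq_coeFn_toMeasure, ENNReal.coe_toReal]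
    -- the partition integral identity
    have hpartInt : ∀ (n : ℕ) (f : E →ᵇ ℝ), ∫ x, f x ∂(μ : Measure E)
        = ∑ i ∈ Finset.range (k n), ∫ x in A n i, f x ∂(μ : Measure E) :=
      fun n f => integral_partition μ f (hmeas n) (hdisj n) (hcover n) (k n) (hempty n)
    -- sum of masses of partition pieces
    have hsumc : ∀ n, ∑ i ∈ Finset.range (k n), ((c n i : ℝ)) = M := by
      intro n
      have h1 := hpartInt n (BoundedContinuousFunction.const E (1:ℝ))
      simp only [BoundedContinuousFunction.const_apply', integral_const, setIntegral_const,
        smul_eq_mul, mul_one, measureReal_def, Measure.restrict_apply_univ] at h1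
      rw [hM, h1]
      exact Finset.sum_congr rfl fun i _ => (coe_c n i)
    -- mass of ν n
    have hmassν : ∀ n, (((ν n) : Measure E) univ).toReal = M := by
      intro n
      have h1 := integral_fin_sum (BoundedContinuousFunction.const E (1:ℝ)) (k n) (y n) (c n)
      simp only [BoundedContinuousFunction.const_apply', integral_const,
        smul_eq_mul, mul_one] at h1
      rw [hνdef]
      exact h1.trans (hsumc n)
    -- weak convergence of ν to μ
    have hweak : Tendsto ν atTop (𝓝 μ) := by
      rw [FiniteMeasure.tendsto_iff_forall_integral_tendsto]
      intro f
      rw [Metric.tendsto_atTop]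
      intro ε hε
      have hε' : 0 < ε / (M + 1) := by positivity
      obtain ⟨δ, hδ0, hδ⟩ := Metric.uniformContinuous_iff.mp
        (CompactSpace.uniformContinuous_of_continuous f.continuous) (ε / (M+1)) hε'
      obtain ⟨N, hN⟩ : ∃ N : ℕ, 1/((N:ℝ)+1) < δ := by
        obtain ⟨N, hN⟩ := exists_nat_gt (1/δ)
        refine ⟨N, ?_⟩
        rw [div_lt_iff₀ (by positivity)]
        rw [div_lt_iff₀ hδ0] at hN
        nlinarith [hδ0]
      refine ⟨N, fun n hn => ?_⟩
      have hrn : 1/((n:ℝ)+1) < δ := by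
        calc 1/((n:ℝ)+1) ≤ 1/((N:ℝ)+1) := by
              apply one_div_le_one_div_of_le (by positivity)
              exact_mod_cast by omega
          _ < δ := hN
      rw [Real.dist_eq]
      have hint1 : ∫ x, f x ∂((ν n : FiniteMeasure E) : Measure E)
          = ∑ i ∈ Finset.range (k n), (c n i : ℝ) * f (y n i) := by
        rw [hνdef]; exact integral_fin_sum f (k n) (y n) (c n)
      rw [hint1, hpartInt n f, ← Finset.sum_sub_distrib]
      have hbound : ∀ i ∈ Finset.range (k n),
          |(c n i : ℝ) * f (y n i) - ∫ x in A n i, f x ∂(μ : Measure E)|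
            ≤ (ε/(M+1)) * ((μ : Measure E) (A n i)).toReal := by
        intro i _
        have hconst : (c n i : ℝ) * f (y n i)
            = ∫ x in A n i, f (y n i) ∂(μ : Measure E) := by
          rw [setIntegral_const, coe_c, smul_eq_mul, measureReal_def]
        rw [hconst, ← integral_sub (integrable_const _)
          ((f.integrable _).integrableOn)]
        have := norm_integral_le_of_norm_le_const
          (μ := (μ : Measure E).restrict (A n i)) (C := ε/(M+1))
          (f := fun x => f (y n i) - f x) ?_
        · rw [measureReal_def, Measure.restrict_apply_univ] at this
          exact this
        · rw [ae_restrict_iff' (hmeas n i)]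
          filter_upwards with x hx
          have hd := hdist n i x hx
          have : dist (f x) (f (y n i)) < ε/(M+1) := hδ (lt_trans hd hrn)
          rw [Real.norm_eq_abs, abs_sub_comm]
          rw [Real.dist_eq] at this
          exact le_of_lt this
      calc |∑ i ∈ Finset.range (k n),
            ((c n i : ℝ) * f (y n i) - ∫ x in A n i, f x ∂(μ : Measure E))|
          ≤ ∑ i ∈ Finset.range (k n),
            |(c n i : ℝ) * f (y n i) - ∫ x in A n i, f x ∂(μ : Measure E)| :=
            Finset.abs_sum_le_sum_abs _ _
        _ ≤ ∑ i ∈ Finset.range (k n), (ε/(M+1)) * ((μ : Measure E) (A n i)).toReal :=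
            Finset.sum_le_sum hbound
        _ = (ε/(M+1)) * M := by
            rw [← Finset.mul_sum]
            congr 1
            have := hsumc n
            simp_rw [coe_c] at this
            exact this
        _ < ε := by
            rw [div_mul_eq_mul_div, div_lt_iff₀ (by positivity)]
            nlinarith [hM0, hε]
    -- inner integral identity for discrete measures
    have hdisc : ∀ (n : ℕ) (m : FiniteMeasure E),
        ∫ x, DF x m ∂((ν n : FiniteMeasure E) : Measure E)
          = ∑ i ∈ Finset.range (k n), (c n i : ℝ) * DF (y n i) m := by
      intro n m
      have h1 := integral_fin_sum (BoundedContinuousFunction.mkOfCompact (Phi DF hDFcont m))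
        (k n) (y n) (c n)
      have h2 : ∀ x, BoundedContinuousFunction.mkOfCompact (Phi DF hDFcont m) x = DF x m := by
        intro x
        rw [BoundedContinuousFunction.mkOfCompact_apply, Phi_apply]
      simp_rw [h2] at h1
      rw [hνdef]
      exact h1
    -- L2 in set-integral form
    have hL2 : ∀ n, F (ν n) = F 0 + ∫ s in Ioc (0:ℝ) 1,
        ∫ x, DF x (Real.toNNReal s • ν n) ∂((ν n : FiniteMeasure E) : Measure E) := by
      intro n
      have h := L2 F DF hF hderiv hDFcont ⟨C, hC⟩ (k n) (y n) (c n)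
      rw [intervalIntegral.integral_of_le zero_le_one] at h
      rw [hνdef]
      rw [h]
      congr 1
      refine setIntegral_congr_fun measurableSet_Ioc fun s _ => ?_
      rw [← hνdef, hdisc n (Real.toNNReal s • ν n), hνdef]
    -- continuity in s of the inner integral (for measurability)
    have hginn_cont : ∀ (σ ρ : FiniteMeasure E),
        Continuous fun s : ℝ => ∫ x, DF x (Real.toNNReal s • σ) ∂(ρ : Measure E) := by
      intro σ ρ
      rw [continuous_iff_continuousAt]
      intro s₀
      exact tendsto_integral_DF DF hDFcont
        (((contSMul_left σ).comp continuous_real_toNNReal).tendsto s₀) tendsto_const_nhds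
    -- convergence of the double integrals
    have hRHS : Tendsto (fun n => ∫ s in Ioc (0:ℝ) 1,
        ∫ x, DF x (Real.toNNReal s • ν n) ∂((ν n : FiniteMeasure E) : Measure E)) atTop
        (𝓝 (∫ s in Ioc (0:ℝ) 1, ∫ x, DF x (Real.toNNReal s • μ) ∂(μ : Measure E))) := by
      apply tendsto_integral_filter_of_dominated_convergence (fun _ => C * M)
      · filter_upwards with n
        exact (hginn_cont (ν n) (ν n)).aestronglyMeasurable
      · filter_upwards with n
        filter_upwards with s
        have := norm_integral_le_of_norm_le_const
          (μ := ((ν n : FiniteMeasure E) : Measure E)) (C := C)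
          (f := fun x => DF x (Real.toNNReal s • ν n))
          (Eventually.of_forall fun x => by rw [Real.norm_eq_abs]; exact hC _ _)
        rw [measureReal_def, hmassν n] at this
        exact this
      · exact integrable_const _
      · filter_upwards with s
        exact tendsto_integral_DF DF hDFcont
          (((contSMul_right (Real.toNNReal s)).tendsto μ).comp hweak) hweak
    -- combine
    have hLHS : Tendsto (fun n => F (ν n)) atTop (𝓝 (F μ)) := (hF.tendsto μ).comp hweak
    have hLHS' : Tendsto (fun n => F (ν n)) atTop (𝓝 (F 0 + ∫ s in Ioc (0:ℝ) 1,
        ∫ x, DF x (Real.toNNReal s • μ) ∂(μ : Measure E))) := by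
      simp_rw [hL2]
      exact tendsto_const_nhds.add hRHS
    have hkey := tendsto_nhds_unique hLHS hLHS'
    rw [hkey, MeasureTheory.integral_Icc_eq_integral_Ioc]

end JT
end JTAux

/-- Jacka–Tribe integral representation: if `F` is continuous on `M_F(E)` with a jointly
continuous and bounded directional derivative `D_x F`, then
`F(μ) = F(0) + ∫₀¹ ∫_E D_x F(θμ) μ(dx) dθ`. -/
theorem stmt_14 {E : Type*} [MetricSpace E] [CompactSpace E]
    [MeasurableSpace E] [BorelSpace E]
    (F : FiniteMeasure E → ℝ) (DF : E → FiniteMeasure E → ℝ)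
    (hF : Continuous F)
    (hderiv : ∀ (x : E) (μ : FiniteMeasure E),
      Tendsto (fun ε : NNReal => (F (μ + ε • diracFM x) - F μ) / (ε : ℝ))
        (nhdsWithin 0 (Ioi 0)) (nhds (DF x μ)))
    (hDFcont : Continuous (fun p : E × FiniteMeasure E => DF p.1 p.2))
    (hDFbdd : ∃ C : ℝ, ∀ (x : E) (μ : FiniteMeasure E), |DF x μ| ≤ C)
    (μ : FiniteMeasure E) :
    F μ = F 0 + ∫ θ in Icc (0 : ℝ) 1, (∫ x, DF x (θ.toNNReal • μ) ∂(μ.toMeasure)) :=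
  JT.main F DF hF hderiv hDFcont hDFbdd μ
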